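/- arXiv:1703.08409 — 2 statements merged into one kernel-verified Lean document; each statement's English description precedes it below -/
import Mathlib

section
/- Let E be a finite-dimensional real inner product space and d : E → E a linear map with d ∘ d = 0; let d* be the adjoint of d and Δ = d ∘ d* + d* ∘ d. Then range(d) ⊆ ker(d), ker(Δ) ⊆ ker(d), and the composition of the inclusion ker(Δ) ↪ ker(d) with the quotient map ker(d) → ker(d)/range(d) is a linear isomorphism; that is, ker(Δ) is isomorphic to the cohomology ker(d)/range(d). -/
/-- Combinatorial Hodge theorem: for `d` with `d² = 0` on a finite-dimensional
real inner product space, with Laplacian `Δ = d d* + d* d`, one has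
`range d ⊆ ker d`, `ker Δ ⊆ ker d`, and the composition of the inclusion
`ker Δ ↪ ker d` with the quotient map `ker d → ker d / range d` is a linear
isomorphism, i.e. `ker Δ ≅ ker d / range d`. -/
theorem ker_laplacian_iso_cohomology
    {E : Type*} [NormedAddCommGroup E] [InnerProductSpace ℝ E]
    [FiniteDimensional ℝ E] (d : E →ₗ[ℝ] E) (hd : d ∘ₗ d = 0) :
    ∃ (h1 : LinearMap.range d ≤ LinearMap.ker d)
      (h2 : LinearMap.ker (d ∘ₗ LinearMap.adjoint d + LinearMap.adjoint d ∘ₗ d)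
              ≤ LinearMap.ker d),
      Function.Bijective
        (((LinearMap.range d).comap (LinearMap.ker d).subtype).mkQ ∘ₗ
          Submodule.inclusion h2) := by
  set δ := LinearMap.adjoint d with hδ
  set Δ : E →ₗ[ℝ] E := d ∘ₗ δ + δ ∘ₗ d with hΔ
  have hdd : ∀ x, d (d x) = 0 := fun x => by
    have := congrArg (fun f => f x) hd; simpa using this
  -- harmonic elements are killed by both d and δ
  have key : ∀ x, Δ x = 0 → d x = 0 ∧ δ x = 0 := by
    intro x hx
    have hx0 : d (δ x) + δ (d x) = 0 := by
      simpa [hΔ, LinearMap.add_apply, LinearMap.comp_apply] using hx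
    have h0 : (0 : ℝ) = ‖δ x‖ ^ 2 + ‖d x‖ ^ 2 := by
      have h := congrArg (fun y => inner (𝕜 := ℝ) y x) hx0
      simp only [inner_zero_left, inner_add_left] at h
      rw [hδ, LinearMap.adjoint_inner_left] at h
      have h2 : inner (𝕜 := ℝ) (d (δ x)) x = inner (𝕜 := ℝ) (δ x) (δ x) := by
        rw [← LinearMap.adjoint_inner_right, ← hδ]
      rw [h2, real_inner_self_eq_norm_sq, real_inner_self_eq_norm_sq] at h
      linarith
    have hdx : ‖d x‖ = 0 := by nlinarith [sq_nonneg ‖δ x‖, sq_nonneg ‖d x‖, norm_nonneg (d x)]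
    have hδx : ‖δ x‖ = 0 := by nlinarith [sq_nonneg ‖δ x‖, sq_nonneg ‖d x‖, norm_nonneg (δ x)]
    exact ⟨norm_eq_zero.mp hdx, norm_eq_zero.mp hδx⟩
  have h1 : LinearMap.range d ≤ LinearMap.ker d := by
    rintro x ⟨y, rfl⟩; exact hdd y
  have h2 : LinearMap.ker Δ ≤ LinearMap.ker d := fun x hx => (key x hx).1
  refine ⟨h1, h2, ?_, ?_⟩
  · -- injectivity
    rw [injective_iff_map_eq_zero]
    rintro ⟨x, hxΔ⟩ hx0
    have hxker : Δ x = 0 := hxΔ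
    have hδx : δ x = 0 := (key x hxker).2
    have hxr : x ∈ LinearMap.range d := by
      have : (⟨x, h2 hxΔ⟩ : LinearMap.ker d) ∈
          (LinearMap.range d).comap (LinearMap.ker d).subtype := by
        rwa [← Submodule.Quotient.mk_eq_zero]
      simpa using this
    obtain ⟨y, rfl⟩ := hxr
    have hinner : inner (𝕜 := ℝ) (d y) (d y) = 0 := by
      rw [← LinearMap.adjoint_inner_right d y (d y), ← hδ, hδx, inner_zero_right]
    have : d y = 0 := inner_self_eq_zero.mp hinner
    exact Subtype.ext (by simpa using this)
  · -- surjectivity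
    have hΔsa : LinearMap.adjoint Δ = Δ := by
      rw [hΔ, map_add, LinearMap.adjoint_comp, LinearMap.adjoint_comp, hδ,
        LinearMap.adjoint_adjoint, add_comm]
    -- (range Δ)ᗮ ≤ ker Δ
    have horth : (LinearMap.range Δ)ᗮ ≤ LinearMap.ker Δ := by
      intro y hy
      have : inner (𝕜 := ℝ) (Δ y) (Δ y) = 0 := by
        have := hy (Δ (Δ y)) ⟨Δ y, rfl⟩
        calc inner (𝕜 := ℝ) (Δ y) (Δ y)
            = inner (𝕜 := ℝ) (LinearMap.adjoint Δ (Δ y)) y := by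
              rw [LinearMap.adjoint_inner_left]
          _ = inner (𝕜 := ℝ) (Δ (Δ y)) y := by rw [hΔsa]
          _ = 0 := this
      exact inner_self_eq_zero.mp this
    have hker_orth : (LinearMap.ker Δ)ᗮ ≤ LinearMap.range Δ := by
      have := Submodule.orthogonal_le horth
      rwa [Submodule.orthogonal_orthogonal] at this
    rintro x
    obtain ⟨⟨x, hxd⟩⟩ := x
    -- decompose x = p + q, p ∈ ker Δ, q ∈ (ker Δ)ᗮ
    obtain ⟨p, hp, q, hq, hpq⟩ :=
      (Submodule.exists_add_mem_mem_orthogonal x :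
        ∃ y ∈ LinearMap.ker Δ, ∃ z ∈ (LinearMap.ker Δ)ᗮ, x = y + z)
    obtain ⟨z, hz⟩ := hker_orth hq
    -- d x = 0 and d p = 0, so d q = 0, i.e. d (d δ z) + d (δ d z) = 0 hence d δ d z = 0
    have hdp : d p = 0 := h2 hp
    have hdq : d q = 0 := by
      have : d x = d p + d q := by rw [hpq, map_add]
      rw [hxd, hdp, zero_add] at this; exact this.symm
    have hq' : q = d (δ z) + δ (d z) := by
      rw [← hz]; simp [hΔ, LinearMap.add_apply, LinearMap.comp_apply]
    have hδdz : δ (d z) = 0 := by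
      have h3 : d (δ (d z)) = 0 := by
        have := congrArg d hq'
        rw [hdq, map_add, hdd] at this
        simpa using this.symm
      have : inner (𝕜 := ℝ) (δ (d z)) (δ (d z)) = 0 := by
        rw [hδ]
        rw [LinearMap.adjoint_inner_left]
        rw [← hδ, h3, inner_zero_right]
      exact inner_self_eq_zero.mp this
    have hqr : q = d (δ z) := by rw [hq', hδdz, add_zero]
    -- then x - d(δ z) = p ∈ ker Δ maps to x
    refine ⟨⟨p, hp⟩, ?_⟩
    have : (⟨x, hxd⟩ : LinearMap.ker d) - ⟨p, h2 hp⟩ ∈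
        (LinearMap.range d).comap (LinearMap.ker d).subtype := by
      simp only [Submodule.mem_comap, Submodule.subtype_apply, AddSubgroupClass.coe_sub]
      exact ⟨δ z, by rw [← hqr, hpq]; abel⟩
    calc (((LinearMap.range d).comap (LinearMap.ker d).subtype).mkQ ∘ₗ
          Submodule.inclusion h2) ⟨p, hp⟩
        = Submodule.Quotient.mk (⟨p, h2 hp⟩ : LinearMap.ker d) := rfl
      _ = Submodule.Quotient.mk ⟨x, hxd⟩ := by
          rw [Submodule.Quotient.eq]
          have h4 := Submodule.neg_mem _ this
          rw [neg_sub] at h4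
          exact h4
end

section
/- Let E be a finite-dimensional real inner product space and d : E → E a linear map with d ∘ d = 0; let d* be the adjoint of d and Δ = d ∘ d* + d* ∘ d. Then every closed element admits a Hodge decomposition: for every u ∈ E with d u = 0 there exist u₀ ∈ ker(Δ) and u' ∈ E such that u = u₀ + d u'. -/
open RealInnerProductSpace

/-- Hodge decomposition of closed elements: for `d` with `d² = 0` on a
finite-dimensional real inner product space and Laplacian `Δ = d d* + d* d`,
every `u` with `d u = 0` can be written as `u = u₀ + d u'` with `Δ u₀ = 0`. -/
theorem closed_eq_harmonic_add_exact
    {E : Type*} [NormedAddCommGroup E] [InnerProductSpace ℝ E]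
    [FiniteDimensional ℝ E] (d : E →ₗ[ℝ] E) (hd : d ∘ₗ d = 0)
    (u : E) (hu : d u = 0) :
    ∃ u₀ ∈ LinearMap.ker (d ∘ₗ LinearMap.adjoint d + LinearMap.adjoint d ∘ₗ d),
      ∃ u' : E, u = u₀ + d u' := by
  set D := LinearMap.adjoint d with hD
  set Δ : E →ₗ[ℝ] E := d ∘ₗ D + D ∘ₗ d with hΔ
  have hΔadj : LinearMap.adjoint Δ = Δ := by
    simp [hΔ, hD, LinearMap.adjoint_comp, LinearMap.adjoint_adjoint]
  -- range Δ = (ker Δ)ᗮ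
  have hle : LinearMap.range Δ ≤ (LinearMap.ker Δ)ᗮ := by
    rintro _ ⟨v, rfl⟩
    intro y hy
    have : ⟪y, Δ v⟫ = ⟪Δ y, v⟫ := by
      rw [← LinearMap.adjoint_inner_left, hΔadj]
    rw [this, LinearMap.mem_ker.mp hy, inner_zero_left]
  have hrank : Module.finrank ℝ (LinearMap.range Δ)
      = Module.finrank ℝ ((LinearMap.ker Δ)ᗮ) := by
    have h1 := LinearMap.finrank_range_add_finrank_ker Δ
    have h2 := Submodule.finrank_add_finrank_orthogonal (K := LinearMap.ker Δ)
    omega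
  have hrange : LinearMap.range Δ = (LinearMap.ker Δ)ᗮ :=
    Submodule.eq_of_le_of_finrank_eq hle hrank
  -- decompose u
  have htop : LinearMap.ker Δ ⊔ (LinearMap.ker Δ)ᗮ = ⊤ :=
    Submodule.sup_orthogonal_of_hasOrthogonalProjection
  have hu_mem : u ∈ LinearMap.ker Δ ⊔ (LinearMap.ker Δ)ᗮ := htop ▸ Submodule.mem_top
  obtain ⟨u₀, hu₀, w, hw, rfl⟩ := Submodule.mem_sup.mp hu_mem
  rw [← hrange] at hw
  obtain ⟨v, rfl⟩ := hw
  -- u₀ harmonic implies d u₀ = 0 and D u₀ = 0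
  have hΔu₀ : Δ u₀ = 0 := hu₀
  have h1 : ⟪d (D u₀), u₀⟫ = ‖D u₀‖ ^ 2 := by
    rw [real_inner_comm, ← LinearMap.adjoint_inner_left, ← hD,
      real_inner_self_eq_norm_sq]
  have h2 : ⟪D (d u₀), u₀⟫ = ‖d u₀‖ ^ 2 := by
    rw [hD, LinearMap.adjoint_inner_left, real_inner_self_eq_norm_sq]
  have hsq : ⟪Δ u₀, u₀⟫ = ‖d u₀‖ ^ 2 + ‖D u₀‖ ^ 2 := by
    rw [show Δ u₀ = d (D u₀) + D (d u₀) from rfl, inner_add_left, h1, h2]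
    ring
  have hdu₀ : d u₀ = 0 := by
    rw [hΔu₀, inner_zero_left] at hsq
    have h1 : ‖d u₀‖ ^ 2 = 0 := by nlinarith [sq_nonneg ‖d u₀‖, sq_nonneg ‖D u₀‖]
    have := pow_eq_zero_iff (n := 2) (by norm_num) |>.mp h1
    exact norm_eq_zero.mp this
  -- d (Δ v) = 0
  have hdΔv : d (Δ v) = 0 := by
    have : d (u₀ + Δ v) = 0 := hu
    rw [map_add, hdu₀, zero_add] at this
    exact this
  -- so d D d v = 0, hence D d v = 0
  have hddDv : d (d (D v)) = 0 := by
    have := congrArg (fun f => f (D v)) hd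
    simpa using this
  have hdDdv : d (D (d v)) = 0 := by
    have : d (Δ v) = d (d (D v)) + d (D (d v)) := by
      simp [hΔ, map_add]
    rw [hdΔv, hddDv, zero_add] at this
    exact this.symm
  have hDdv : D (d v) = 0 := by
    have h0 : ⟪D (d v), D (d v)⟫ = 0 := by
      rw [hD, LinearMap.adjoint_inner_left, ← hD, hdDdv, inner_zero_right]
    exact inner_self_eq_zero.mp h0
  refine ⟨u₀, hu₀, D v, ?_⟩
  have : Δ v = d (D v) := by
    simp [hΔ, hDdv]
  rw [this]
end
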